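/- (Reduction of the Lax pair of the second flow.) Let c_0 ∈ ℝ, I ⊆ ℝ an open interval, σ : I → ℝ twice differentiable with σ'(t) > 0 and σ''(t) = -2 c_0 σ'(t)^2 on I, ν : ℤ → ℝ arbitrary, η(n,t) = ν(n) + σ(t), and H, G : ℝ → ℝ. Fix λ ∈ ℝ and set ζ(t) = λ / √(σ'(t)), u(n,t) = √(σ'(t)) H(η(n,t)), v(n,t) = √(σ'(t)) G(η(n,t)). Let φ : ℝ × ℝ → ℝ be differentiable in both arguments and suppose that for all n ∈ ℤ and t ∈ I, writing η = η(n,t), η̄ = η(n+1,t), η̲ = η(n-1,t), z = ζ(t): z φ(η,z) = H(η) φ(η̄,z) + H(η̲) φ(η̲,z) + G(η) φ(η,z), and c_0 z ∂_ζ φ(η,z) + ∂_η φ(η,z) = 2 H(η)(z + G(η)) φ(η̄,z) - (z^2 + H(η)^2 - H(η̲)^2 - G(η)^2) φ(η,z). Then ψ(n,t) := φ(η(n,t), ζ(t)) satisfies the Lax pair of the second flow: λ ψ(n,t) = u(n,t) ψ(n+1,t) + u(n-1,t) ψ(n-1,t) + v(n,t) ψ(n,t), and ∂_t ψ(n,t)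 = 2 u(n,t)(λ + v(n,t)) ψ(n+1,t) - (λ^2 + u(n,t)^2 - u(n-1,t)^2 - v(n,t)^2) ψ(n,t), for all n ∈ ℤ, t ∈ I. -/

import Mathlib

/-- Reduction of the Lax pair of the second flow: if `φ(η, ζ)` solves the
reduced second-flow Lax pair along the reduction `η(n,t) = ν(n) + σ(t)`,
`ζ(t) = λ/√(σ'(t))`, then `ψ(n,t) = φ(η(n,t), ζ(t))` solves the Lax pair of the second
flow of the Toda hierarchy with `u = √(σ') H(η)`, `v = √(σ') G(η)`. -/
theorem lax_reduction_second_flow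
    (c₀ a b lam : ℝ) (σ σ' σ'' : ℝ → ℝ)
    (hσ : ∀ t ∈ Set.Ioo a b, HasDerivAt σ (σ' t) t)
    (hσ' : ∀ t ∈ Set.Ioo a b, HasDerivAt σ' (σ'' t) t)
    (hσpos : ∀ t ∈ Set.Ioo a b, 0 < σ' t)
    (hode : ∀ t ∈ Set.Ioo a b, σ'' t = -2 * c₀ * (σ' t)^2)
    (ν : ℤ → ℝ) (η : ℤ → ℝ → ℝ) (hη : ∀ (n : ℤ) (t : ℝ), η n t = ν n + σ t)
    (H G : ℝ → ℝ)
    (ζ : ℝ → ℝ) (hζ : ∀ t : ℝ, ζ t = lam / Real.sqrt (σ' t))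
    (u v : ℤ → ℝ → ℝ)
    (hu : ∀ (n : ℤ) (t : ℝ), u n t = Real.sqrt (σ' t) * H (η n t))
    (hv : ∀ (n : ℤ) (t : ℝ), v n t = Real.sqrt (σ' t) * G (η n t))
    (φ φη φζ : ℝ × ℝ → ℝ)
    (hφ : ∀ p : ℝ × ℝ, HasFDerivAt φ
      (φη p • ContinuousLinearMap.fst ℝ ℝ ℝ + φζ p • ContinuousLinearMap.snd ℝ ℝ ℝ) p)
    (hlax₁ : ∀ (n : ℤ), ∀ t ∈ Set.Ioo a b,
      ζ t * φ (η n t, ζ t) =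
        H (η n t) * φ (η (n+1) t, ζ t) + H (η (n-1) t) * φ (η (n-1) t, ζ t)
          + G (η n t) * φ (η n t, ζ t))
    (hlax₂ : ∀ (n : ℤ), ∀ t ∈ Set.Ioo a b,
      c₀ * ζ t * φζ (η n t, ζ t) + φη (η n t, ζ t) =
        2 * H (η n t) * (ζ t + G (η n t)) * φ (η (n+1) t, ζ t)
          - ((ζ t)^2 + (H (η n t))^2 - (H (η (n-1) t))^2 - (G (η n t))^2)
              * φ (η n t, ζ t))
    (ψ : ℤ → ℝ → ℝ) (hψ : ∀ (n : ℤ) (t : ℝ), ψ n t = φ (η n t, ζ t)) :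
    ∀ (n : ℤ), ∀ t ∈ Set.Ioo a b,
      lam * ψ n t = u n t * ψ (n+1) t + u (n-1) t * ψ (n-1) t + v n t * ψ n t ∧
      HasDerivAt (fun s => ψ n s)
        (2 * u n t * (lam + v n t) * ψ (n+1) t
          - (lam^2 + (u n t)^2 - (u (n-1) t)^2 - (v n t)^2) * ψ n t) t := by
  intro n t ht
  have hspos := hσpos t ht
  have hrpos : 0 < Real.sqrt (σ' t) := Real.sqrt_pos.mpr hspos
  have hr2 : Real.sqrt (σ' t) ^ 2 = σ' t := Real.sq_sqrt hspos.le
  have hlam : lam = ζ t * Real.sqrt (σ' t) := by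
    rw [hζ]; field_simp
  refine ⟨?_, ?_⟩
  · rw [hψ, hψ, hψ, hu, hu, hv, hlam]
    linear_combination Real.sqrt (σ' t) * hlax₁ n t ht
  · have hζd : HasDerivAt ζ (c₀ * ζ t * σ' t) t := by
      have h1 : HasDerivAt (fun x => Real.sqrt (σ' x)) (1 / (2 * Real.sqrt (σ' t)) * σ'' t) t :=
        (Real.hasDerivAt_sqrt hspos.ne').comp t (hσ' t ht)
      have h2 := (h1.inv hrpos.ne').const_mul lam
      have heq : ζ = fun x => lam * (Real.sqrt (σ' x))⁻¹ := by
        funext x; rw [hζ, div_eq_mul_inv]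
      rw [heq]
      refine h2.congr_deriv ?_
      rw [hlam, hode t ht]
      field_simp
      linear_combination (-(ζ t * c₀)) * hr2
    have hηd : HasDerivAt (fun x => η n x) (σ' t) t := by
      simp only [hη]
      exact (hσ t ht).const_add (ν n)
    have hcurve : HasDerivAt (fun x => (η n x, ζ x)) (σ' t, c₀ * ζ t * σ' t) t :=
      hηd.prodMk hζd
    have hd : HasDerivAt (fun x => φ (η n x, ζ x))
        (φη (η n t, ζ t) * σ' t + φζ (η n t, ζ t) * (c₀ * ζ t * σ' t)) t := by
      have := (hφ (η n t, ζ t)).comp_hasDerivAt t hcurve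
      refine this.congr_deriv ?_
      simp
    have hfun : (fun s => ψ n s) = fun x => φ (η n x, ζ x) := by
      funext x; rw [hψ]
    rw [hfun]
    convert hd using 1
    rw [hψ, hψ, hu, hu, hv, hlam]
    linear_combination (-(σ' t)) * hlax₂ n t ht +
      (2 * H (η n t) * (ζ t + G (η n t)) * φ (η (n+1) t, ζ t)
        - ((ζ t)^2 + (H (η n t))^2 - (H (η (n-1) t))^2 - (G (η n t))^2)
            * φ (η n t, ζ t)) * hr2
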